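/- The median of n real numbers, n ≥ 2, changing a single input by an arbitrary amount shifts the median by at most the gap to an adjacent order statistic; formally, if n = 2k+1 and we replace one input a_i by any a_i' ∈ ℝ, the new median lies between the k-th and (k+2)-th order statistics of the original multiset. -/

import Mathlib

/-- In a sorted list, if `p` fails for everything `≥ l[j]`, then at most `j`
elements satisfy `p`. -/
lemma countP_le_of_sorted (l : List ℝ) (hs : l.Pairwise (· ≤ ·)) (p : ℝ → Bool)
    (j : ℕ) (hj : j < l.length) (hp : ∀ y, l[j] ≤ y → p y = false) :
    l.countP p ≤ j := by
  have hsplit : l.countP p = (l.take j).countP p + (l.drop j).countP p := by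
    rw [← List.countP_append, List.take_append_drop]
  have hdrop : (l.drop j).countP p = 0 := by
    rw [List.countP_eq_zero]
    intro a ha
    obtain ⟨m, hm, hma⟩ := List.mem_iff_getElem.mp ha
    have hmlen : j + m < l.length := by
      rw [List.length_drop] at hm; omega
    have hae : a = l[j + m] := by rw [← hma, List.getElem_drop]
    have hle : l[j] ≤ l[j + m] := by
      have := hs.rel_get_of_le (a := ⟨j, hj⟩) (b := ⟨j + m, hmlen⟩)
        (by simp [Fin.le_def])
      simpa using this
    rw [hae]
    simp [hp _ hle]
  have htake : (l.take j).countP p ≤ j := by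
    calc (l.take j).countP p ≤ (l.take j).length := List.countP_le_length
    _ ≤ j := by simp [List.length_take]
  omega

/-- In a sorted list, if `p` is downward closed and holds at `l[j]`, then at
least `j+1` elements satisfy `p`. -/
lemma lt_countP_of_sorted (l : List ℝ) (hs : l.Pairwise (· ≤ ·)) (p : ℝ → Bool)
    (j : ℕ) (hj : j < l.length) (hmono : ∀ y z : ℝ, y ≤ z → p z = true → p y = true)
    (hpj : p l[j] = true) : j + 1 ≤ l.countP p := by
  have hsplit : l.countP p = (l.take (j+1)).countP p + (l.drop (j+1)).countP p := by
    rw [← List.countP_append, List.take_append_drop]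
  have htake : (l.take (j+1)).countP p = j + 1 := by
    have hlen : (l.take (j+1)).length = j + 1 := by
      simp [List.length_take]; omega
    have hall : ∀ a ∈ l.take (j+1), p a = true := by
      intro a ha
      obtain ⟨m, hm, hma⟩ := List.mem_iff_getElem.mp ha
      have hmj : m < j + 1 := lt_of_lt_of_le hm (le_of_eq hlen)
      have hm' : m < l.length := by omega
      have hae : a = l[m] := by rw [← hma, List.getElem_take]
      have hle : l[m] ≤ l[j] := by
        have := hs.rel_get_of_le (a := ⟨m, hm'⟩) (b := ⟨j, hj⟩)
          (by simp [Fin.le_def]; omega)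
        simpa using this
      rw [hae]
      exact hmono _ _ hle hpj
    rw [List.countP_eq_length.mpr hall, hlen]
  omega

lemma countP_le_countP_add_count {α : Type*} [DecidableEq α] (q q' : α → Bool)
    (i0 : α) (h : ∀ x, q x = true → q' x = true ∨ x = i0) (l : List α) :
    l.countP q ≤ l.countP q' + l.count i0 := by
  induction l with
  | nil => simp
  | cons a l ih =>
    rw [List.countP_cons, List.countP_cons, List.count_cons]
    by_cases hq : q a = true
    · rcases h a hq with hq' | rfl
      · simp [hq, hq']; omega
      · simp [hq]; omega
    · simp [hq]; omega

/-- Changing one coordinate changes each count by at most one. -/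
lemma countP_ofFn_le {n : ℕ} (f g : Fin n → ℝ) (i0 : Fin n)
    (hrest : ∀ j, j ≠ i0 → g j = f j) (p : ℝ → Bool) :
    (List.ofFn g).countP p ≤ (List.ofFn f).countP p + 1 := by
  rw [List.ofFn_eq_map, List.ofFn_eq_map, List.countP_map, List.countP_map]
  have hcount : (List.finRange n).count i0 ≤ 1 :=
    List.nodup_iff_count_le_one.mp (List.nodup_finRange n) i0
  have := countP_le_countP_add_count (p ∘ g) (p ∘ f) i0
    (fun x hx => by
      by_cases hxi : x = i0
      · exact Or.inr hxi
      · exact Or.inl (by simpa [Function.comp, hrest x hxi] using hx))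
    (List.finRange n)
  omega

noncomputable def median {n : ℕ} (a : Fin (2 * n + 1) → ℝ) : ℝ :=
  ((List.ofFn a).insertionSort (· ≤ ·)).getD n 0

/-- Changing a single input of an odd-size multiset moves the median at most
to the k-th / (k+2)-th order statistics of the original multiset. -/
theorem median_single_change_bounded {k : ℕ} (hk : 1 ≤ k)
    (a a' : Fin (2 * k + 1) → ℝ) (i0 : Fin (2 * k + 1))
    (hrest : ∀ j, j ≠ i0 → a' j = a j) :
    ((List.ofFn a).insertionSort (· ≤ ·)).getD (k - 1) 0 ≤ median a' ∧
    median a' ≤ ((List.ofFn a).insertionSort (· ≤ ·)).getD (k + 1) 0 := by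
  set s := (List.ofFn a).insertionSort (· ≤ ·) with hs_def
  set s' := (List.ofFn a').insertionSort (· ≤ ·) with hs'_def
  have hlen : s.length = 2 * k + 1 := by
    rw [hs_def, List.length_insertionSort, List.length_ofFn]
  have hlen' : s'.length = 2 * k + 1 := by
    rw [hs'_def, List.length_insertionSort, List.length_ofFn]
  have hsorted : s.Pairwise (· ≤ ·) := List.pairwise_insertionSort _ _
  have hsorted' : s'.Pairwise (· ≤ ·) := List.pairwise_insertionSort _ _
  have hk1 : k - 1 < s.length := by omega
  have hk1' : k + 1 < s.length := by omega
  have hk' : k < s'.length := by omega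
  have hcnt : ∀ p : ℝ → Bool, s'.countP p ≤ s.countP p + 1 := by
    intro p
    rw [(List.perm_insertionSort _ _).countP_eq, (List.perm_insertionSort _ _).countP_eq]
    exact countP_ofFn_le a a' i0 hrest p
  have hcnt2 : ∀ p : ℝ → Bool, s.countP p ≤ s'.countP p + 1 := by
    intro p
    rw [(List.perm_insertionSort _ _).countP_eq, (List.perm_insertionSort _ _).countP_eq]
    exact countP_ofFn_le a' a i0 (fun j hj => (hrest j hj).symm) p
  rw [median, List.getD_eq_getElem _ _ hk1, List.getD_eq_getElem _ _ hk1',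
    List.getD_eq_getElem _ _ hk']
  constructor
  · -- s[k-1] ≤ s'[k]
    by_contra hlt
    push_neg at hlt
    set x := s[k-1]
    have h1 : k + 1 ≤ s'.countP (fun y => decide (y < x)) :=
      lt_countP_of_sorted s' hsorted' _ k hk'
        (fun y z hyz hz => by simp at hz ⊢; exact lt_of_le_of_lt hyz hz)
        (by simpa using hlt)
    have h2 : s.countP (fun y => decide (y < x)) ≤ k - 1 :=
      countP_le_of_sorted s hsorted _ (k-1) hk1
        (fun y hy => by simp; exact hy)
    have := hcnt (fun y => decide (y < x))
    omega
  · -- s'[k] ≤ s[k+1]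
    by_contra hlt
    push_neg at hlt
    set y := s[k+1]
    have h1 : s'.countP (fun z => decide (z ≤ y)) ≤ k :=
      countP_le_of_sorted s' hsorted' _ k hk'
        (fun z hz => by simp; linarith)
    have h2 : k + 2 ≤ s.countP (fun z => decide (z ≤ y)) :=
      lt_countP_of_sorted s hsorted _ (k+1) hk1'
        (fun u v huv hv => by simp at hv ⊢; linarith)
        (by simp [y])
    have := hcnt2 (fun z => decide (z ≤ y))
    omega
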